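/- arXiv:1112.0270 — 4 statements merged into one kernel-verified Lean document; each statement's English description precedes it below -/
import Mathlib

section
/- Let n ≥ 1 be an integer, let α_1,…,α_n, β, λ be real numbers with β ≠ λ. Suppose x_1,…,x_n : ℝ → ℝ satisfy x_k(0) = 0 for all k and, for every real t, x_1 is differentiable at t with derivative α_1 e^{−λt} − β x_1(t) and, for each 2 ≤ k ≤ n, x_k is differentiable at t with derivative α_k x_{k−1}(t) − β x_k(t). Then for every real t, x_n(t) = ((∏_{j=1}^n α_j) / (β − λ)^n) · e^{−λt} · P(n, (β − λ)t), where P is the normalised lower incomplete gamma function. -/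
/-- The normalised lower incomplete gamma function `P(n, x)` for integer `n ≥ 1`:
`P(n, x) = (1/(n-1)!) ∫_0^x e^{-s} s^{n-1} ds`. -/
noncomputable def normIncGamma (n : ℕ) (x : ℝ) : ℝ :=
  (∫ s in (0:ℝ)..x, Real.exp (-s) * s ^ (n - 1)) / (Nat.factorial (n - 1))

lemma normIncGamma_zero (n : ℕ) : normIncGamma n 0 = 0 := by
  unfold normIncGamma; simp

lemma hasDerivAt_normIncGamma (k : ℕ) (x : ℝ) :
    HasDerivAt (normIncGamma k)
      (Real.exp (-x) * x ^ (k - 1) / (Nat.factorial (k - 1))) x := by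
  have hc : Continuous fun s : ℝ => Real.exp (-s) * s ^ (k - 1) := by continuity
  have h := intervalIntegral.integral_hasDerivAt_right
    (hc.intervalIntegrable 0 x)
    (hc.aestronglyMeasurable.stronglyMeasurableAtFilter) hc.continuousAt
  exact h.div_const _

lemma hasDerivAt_expneg (c x : ℝ) :
    HasDerivAt (fun x : ℝ => Real.exp (c * x)) (c * Real.exp (c * x)) x := by
  exact ((Real.hasDerivAt_exp (c * x)).comp x
    ((hasDerivAt_id x).const_mul c)).congr_deriv (by simp only [id, mul_one]; ring)

lemma normIncGamma_one (x : ℝ) : normIncGamma 1 x = 1 - Real.exp (-x) := by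
  unfold normIncGamma
  have h : ∀ s ∈ Set.uIcc (0:ℝ) x,
      HasDerivAt (fun u : ℝ => -Real.exp (-u)) (Real.exp (-s) * s ^ (1-1)) s := by
    intro s _
    simpa [Pi.neg_def] using ((hasDerivAt_expneg (-1) s).neg)
  rw [intervalIntegral.integral_eq_sub_of_hasDerivAt h
    ((by continuity : Continuous fun s : ℝ => Real.exp (-s) * s ^ (1-1)).intervalIntegrable 0 x)]
  simp; ring

lemma normIncGamma_succ (k : ℕ) (hk : 1 ≤ k) (x : ℝ) :
    normIncGamma (k+1) x = normIncGamma k x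
      - Real.exp (-x) * x ^ k / (Nat.factorial k) := by
  obtain ⟨j, rfl⟩ : ∃ j, k = j + 1 := ⟨k - 1, by omega⟩
  set g : ℝ → ℝ := fun x => normIncGamma (j+2) x - normIncGamma (j+1) x
    + Real.exp (-x) * x ^ (j+1) / (Nat.factorial (j+1)) with hg
  have hder : ∀ x, HasDerivAt g 0 x := by
    intro x
    have hA := hasDerivAt_normIncGamma (j+2) x
    have hB := hasDerivAt_normIncGamma (j+1) x
    have hE : HasDerivAt (fun x : ℝ => Real.exp (-x)) (-Real.exp (-x)) x := by
      simpa using hasDerivAt_expneg (-1) x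
    have hC : HasDerivAt (fun x : ℝ => Real.exp (-x) * x ^ (j+1) / (Nat.factorial (j+1)))
        ((-Real.exp (-x) * x ^ (j+1) + Real.exp (-x) * ((j+1) * x ^ j))
          / (Nat.factorial (j+1))) x := by
      have := (hE.mul (hasDerivAt_pow (j+1) x)).div_const (Nat.factorial (j+1) : ℝ)
      refine this.congr_deriv ?_
      push_cast
      ring
    have h := (hA.sub hB).add hC
    refine h.congr_deriv ?_
    have h1 : ((j+2) - 1 : ℕ) = j + 1 := rfl
    have h2 : ((j+1) - 1 : ℕ) = j := rfl
    rw [h1, h2]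
    have hf1 : (Nat.factorial (j+1) : ℝ) = (j+1) * Nat.factorial j := by
      rw [Nat.factorial_succ]; push_cast; ring
    rw [hf1]
    field_simp
    ring
  have hconst := is_const_of_deriv_eq_zero (fun s => (hder s).differentiableAt)
    (fun s => (hder s).deriv) x 0
  have hg0 : g 0 = 0 := by
    simp [hg, normIncGamma_zero]
  have : g x = 0 := by rw [hconst, hg0]
  simp only [hg] at this
  linarith

lemma ode_unique (β : ℝ) (g u v : ℝ → ℝ)
    (hu : ∀ t, HasDerivAt u (g t - β * u t) t)
    (hv : ∀ t, HasDerivAt v (g t - β * v t) t)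
    (h00 : u 0 = v 0) (t : ℝ) : u t = v t := by
  set w : ℝ → ℝ := fun s => (u s - v s) * Real.exp (β * s) with hw
  have hder : ∀ s, HasDerivAt w 0 s := by
    intro s
    have h := ((hu s).sub (hv s)).mul (hasDerivAt_expneg β s)
    refine h.congr_deriv ?_
    simp only [Pi.sub_apply]
    ring
  have hconst := is_const_of_deriv_eq_zero (fun s => (hder s).differentiableAt)
    (fun s => (hder s).deriv) t 0
  have h0 : w 0 = 0 := by simp [hw, h00]
  have ht : w t = 0 := by rw [hconst, h0]
  have hexp : Real.exp (β * t) ≠ 0 := Real.exp_ne_zero _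
  rcases mul_eq_zero.mp ht with h | h
  · linarith
  · exact absurd h hexp

/-- output of a weakly activated linear cascade of length `n` with exponentially
decaying stimulus `α 1 * e^{-λ t}`, identical inactivation rates `β ≠ λ`, and resting initial
conditions: `x n t = ((∏ αⱼ)/(β-λ)ⁿ) e^{-λ t} P(n, (β-λ) t)`. -/
theorem cascade_output_decaying_stimulus
    (n : ℕ) (hn : 1 ≤ n) (α : ℕ → ℝ) (β lam : ℝ) (hβ : β ≠ lam)
    (x : ℕ → ℝ → ℝ)
    (h0 : ∀ k, 1 ≤ k → k ≤ n → x k 0 = 0)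
    (h1 : ∀ t : ℝ, HasDerivAt (x 1) (α 1 * Real.exp (-lam * t) - β * x 1 t) t)
    (hk : ∀ k, 2 ≤ k → k ≤ n → ∀ t : ℝ,
      HasDerivAt (x k) (α k * x (k - 1) t - β * x k t) t) :
    ∀ t : ℝ, x n t = ((∏ j ∈ Finset.Icc 1 n, α j) / (β - lam) ^ n) *
      Real.exp (-lam * t) * normIncGamma n ((β - lam) * t) := by
  have hμ : β - lam ≠ 0 := sub_ne_zero.mpr hβ
  set μ := β - lam with hμdef
  set f : ℕ → ℝ → ℝ := fun k t =>
    ((∏ j ∈ Finset.Icc 1 k, α j) / μ ^ k) * (Real.exp (-lam * t) * normIncGamma k (μ * t))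
    with hf
  -- derivative of f k
  have hfd : ∀ (k : ℕ) (t : ℝ), HasDerivAt (f k)
      (((∏ j ∈ Finset.Icc 1 k, α j) / μ ^ k) *
        (-lam * Real.exp (-lam * t) * normIncGamma k (μ * t)
          + Real.exp (-lam * t) *
            (μ * (Real.exp (-(μ * t)) * (μ * t) ^ (k - 1) / (Nat.factorial (k - 1)))))) t := by
    intro k t
    have hP : HasDerivAt (fun t : ℝ => normIncGamma k (μ * t))
        (μ * (Real.exp (-(μ * t)) * (μ * t) ^ (k - 1) / (Nat.factorial (k - 1)))) t := by
      have := (hasDerivAt_normIncGamma k (μ * t)).comp t ((hasDerivAt_id t).const_mul μ)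
      refine this.congr_deriv ?_
      simp only [id, mul_one]
      ring
    have hE : HasDerivAt (fun t : ℝ => Real.exp (-lam * t)) (-lam * Real.exp (-lam * t)) t :=
      hasDerivAt_expneg (-lam) t
    have h := (hE.mul hP).const_mul ((∏ j ∈ Finset.Icc 1 k, α j) / μ ^ k)
    exact h
  have hf0 : ∀ k, f k 0 = 0 := by
    intro k
    simp [hf, normIncGamma_zero]
  have key : ∀ k, 1 ≤ k → k ≤ n → ∀ t, x k t = f k t := by
    intro k hk1
    induction k, hk1 using Nat.le_induction with
    | base =>
      intro _ t
      refine ode_unique β (fun t => α 1 * Real.exp (-lam * t)) (x 1) (f 1) h1 ?_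
        (by rw [h0 1 le_rfl hn, hf0 1]) t
      intro s
      have hd := hfd 1 s
      convert hd using 1
      simp only [hf]
      rw [normIncGamma_one]
      have h11 : (∏ j ∈ Finset.Icc 1 1, α j) = α 1 := by simp
      rw [h11]
      norm_num
      rw [hμdef]
      field_simp
      ring
    | succ m hm ih =>
      intro hmn t
      have hxm : ∀ s, x m s = f m s := ih (by omega)
      refine ode_unique β (fun s => α (m+1) * x m s) (x (m+1)) (f (m+1)) ?_ ?_
        (by rw [h0 (m+1) (by omega) hmn, hf0]) t
      · intro s
        have := hk (m+1) (by omega) hmn s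
        simpa using this
      · intro s
        have hd := hfd (m+1) s
        have hrec := normIncGamma_succ m hm (μ * s)
        have hprod : (∏ j ∈ Finset.Icc 1 (m+1), α j)
            = (∏ j ∈ Finset.Icc 1 m, α j) * α (m+1) :=
          Finset.prod_Icc_succ_top (by omega) α
        convert hd using 1
        simp only [hxm, hf, Nat.add_sub_cancel]
        rw [hrec, hprod]
        have hfm : (Nat.factorial m : ℝ) ≠ 0 := Nat.cast_ne_zero.mpr (Nat.factorial_ne_zero m)
        have hμm1 : (m : ℕ) - 1 + 1 = m := by omega
        rw [hμdef]
        have hmp : ((β - lam) * s) ^ m = (β - lam) ^ m * s ^ m := mul_pow _ _ _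
        rw [hmp]
        field_simp
        ring
  intro t
  have := key n hn le_rfl t
  rw [this, hf]
  ring
end

section
/- Let n ≥ 2 be an integer, let α_1,…,α_n, β, ε be real numbers with ε ≠ 0, let 1 ≤ i ≤ n, let H_i be the ε-perturbed cascade rate matrix, and set B_i = H_i + βI. For each 1 ≤ k ≤ n−1 define the vector v_k ∈ ℝ^n as follows: if i ≤ k, then v_k(j) = 0 for 1 ≤ j ≤ k and v_k(j) = −π_j (−1/ε)^{j−k} for k+1 ≤ j ≤ n; if i > k, then v_k(k) = π_k, v_k(j) = 0 for all other j < i, and v_k(j) = −π_j (−1/ε)^{j−k} for i ≤ j ≤ n. Then B_i v_{n−1} = 0 and B_i v_k = v_{k+1} for every 1 ≤ k ≤ n−2; that is, v_{n−1}, v_{n−2}, …, v_1 form a chain of generalised eigenvectors of H_i associated with the eigenvalue −β. -/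
open Matrix

/-- `πⱼ = ∏_{l=1}^j α_l` (1-based product of activation rates). -/
noncomputable def piProd (α : ℕ → ℝ) (j : ℕ) : ℝ := ∏ l ∈ Finset.Icc 1 j, α l

/-- The ε-perturbed cascade rate matrix `H_i` (1-based index `i` of the perturbed component):
`H_i (j,j) = -β` for `j ≠ i`, `H_i (i,i) = -(β+ε)`, `H_i (j+1, j) = α (j+1)`, zeros elsewhere. -/
noncomputable def perturbedCascadeMatrix (n : ℕ) (α : ℕ → ℝ) (β ε : ℝ) (i : ℕ) :
    Matrix (Fin n) (Fin n) ℝ :=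
  fun r c =>
    if r = c then (if r.val + 1 = i then -(β + ε) else -β)
    else if r.val = c.val + 1 then α (r.val + 1)
    else 0

/-- The eigenvector `q₁` of `H_i` (first column of `Q_i`), with 1-based entries
`q₁(j) = 0` for `j < i` and `q₁(j) = πⱼ (-1/ε)^{j-1}` for `j ≥ i`. -/
noncomputable def qOne (n : ℕ) (α : ℕ → ℝ) (ε : ℝ) (i : ℕ) : Fin n → ℝ :=
  fun r =>
    if r.val + 1 < i then 0 else piProd α (r.val + 1) * (-1 / ε) ^ r.val

/-- The generalised eigenvector `v_k` of `H_i` associated with `-β` (1-based entries `j`):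
if `i ≤ k` then `v_k(j) = 0` for `j ≤ k` and `v_k(j) = -πⱼ (-1/ε)^{j-k}` for `j > k`;
if `i > k` then `v_k(k) = π_k`, `v_k(j) = 0` for other `j < i`, and
`v_k(j) = -πⱼ (-1/ε)^{j-k}` for `j ≥ i`. -/
noncomputable def genEigVec (n : ℕ) (α : ℕ → ℝ) (ε : ℝ) (i k : ℕ) : Fin n → ℝ :=
  fun r =>
    let j := r.val + 1
    if i ≤ k then
      (if j ≤ k then 0 else -(piProd α j) * (-1 / ε) ^ (j - k))
    else
      if j = k then piProd α k
      else if j < i then 0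
      else -(piProd α j) * (-1 / ε) ^ (j - k)

/-- The generalised-eigenvector matrix `Q_i`: its first column is `q₁` and, for each
`1 ≤ k ≤ n-1`, its column `n-k+1` is `v_k`. -/
noncomputable def Qmat (n : ℕ) (α : ℕ → ℝ) (ε : ℝ) (i : ℕ) : Matrix (Fin n) (Fin n) ℝ :=
  fun r c =>
    if c.val = 0 then qOne n α ε i r
    else genEigVec n α ε i (n - (c.val + 1) + 1) r

/-- The 1-based product satisfies `π_{j+1} = π_j · α_{j+1}`. -/
lemma piProd_succ' (α : ℕ → ℝ) (j : ℕ) : piProd α (j + 1) = piProd α j * α (j + 1) := by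
  unfold piProd
  rw [Finset.prod_Icc_succ_top (by omega)]

/-- Row formula for `(H_i + βI) *ᵥ v`: only the diagonal entry (nonzero only in row `i`)
and the subdiagonal entry contribute. -/
lemma mulVecB' (n : ℕ) (α : ℕ → ℝ) (β ε : ℝ) (i : ℕ) (v : Fin n → ℝ) (r : Fin n) :
    ((perturbedCascadeMatrix n α β ε i + β • (1 : Matrix (Fin n) (Fin n) ℝ)) *ᵥ v) r
      = (if r.val + 1 = i then -ε else 0) * v r
        + (if h : 0 < r.val then
            α (r.val + 1) * v ⟨r.val - 1, lt_of_le_of_lt (Nat.sub_le _ _) r.isLt⟩ else 0) := by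
  have hterm : ∀ c : Fin n,
      (perturbedCascadeMatrix n α β ε i + β • (1 : Matrix (Fin n) (Fin n) ℝ)) r c * v c
        = (if r = c then (if r.val + 1 = i then -ε else 0) * v c else 0)
          + (if (r : ℕ) = (c : ℕ) + 1 then α (r.val + 1) * v c else 0) := by
    intro c
    simp only [Matrix.add_apply, Matrix.smul_apply, Matrix.one_apply, perturbedCascadeMatrix,
      smul_eq_mul]
    rcases eq_or_ne r c with h | h
    · subst h
      have : ¬ ((r : ℕ) = (r : ℕ) + 1) := by omega
      simp only [if_pos rfl, this, if_false, add_zero]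
      split_ifs <;> ring
    · simp only [if_neg h, mul_zero]
      split_ifs <;> ring
  simp only [Matrix.mulVec, dotProduct]
  rw [Finset.sum_congr rfl (fun c _ => hterm c), Finset.sum_add_distrib]
  congr 1
  · rw [Finset.sum_ite_eq]
    simp
  · rcases Nat.eq_zero_or_pos r.val with h0 | hpos
    · rw [dif_neg (by omega)]
      apply Finset.sum_eq_zero
      intro c _
      rw [if_neg (by omega)]
    · rw [dif_pos hpos]
      rw [Finset.sum_eq_single (⟨r.val - 1, lt_of_le_of_lt (Nat.sub_le _ _) r.isLt⟩ : Fin n)]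
      · rw [if_pos (by simp; omega)]
      · intro c _ hc
        rw [if_neg]
        intro h
        apply hc
        apply Fin.ext
        simp
        omega
      · simp

/-- Per-row computation: `(H_i + βI) v_k = v_{k+1}` entrywise, for `k ≥ 1`. -/
lemma genEigVec_step (n : ℕ) (α : ℕ → ℝ) (ε : ℝ) (hε : ε ≠ 0) (i : ℕ) (hi : 1 ≤ i)
    (k : ℕ) (hk1 : 1 ≤ k) (r : Fin n) :
    (if r.val + 1 = i then -ε else 0) * genEigVec n α ε i k r
        + (if h : 0 < r.val then
            α (r.val + 1) *
              genEigVec n α ε i k ⟨r.val - 1, lt_of_le_of_lt (Nat.sub_le _ _) r.isLt⟩ else 0)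
      = genEigVec n α ε i (k + 1) r := by
  obtain ⟨rv, hrv⟩ := r
  match rv with
  | 0 =>
    simp only [genEigVec]
    rw [dif_neg (by omega : ¬ (0:ℕ) < 0)]
    by_cases h1 : i ≤ k
    · rw [if_pos h1, if_pos (by omega : (0:ℕ) + 1 ≤ k), if_pos (by omega : i ≤ k + 1),
        if_pos (by omega : (0:ℕ) + 1 ≤ k + 1)]
      ring
    · rw [if_neg h1, if_neg (by omega : ¬ (0:ℕ) + 1 = i)]
      by_cases h3 : i ≤ k + 1
      · rw [if_pos h3, if_pos (by omega : (0:ℕ) + 1 ≤ k + 1)]; ring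
      · rw [if_neg h3, if_neg (by omega : ¬ (0:ℕ) + 1 = k + 1)]
        split_ifs <;> first | ring1 | (exfalso; omega)
  | (m + 1) =>
    simp only [genEigVec]
    rw [dif_pos (Nat.succ_pos m)]
    simp only [Nat.add_sub_cancel]
    by_cases hik : i ≤ k
    · simp only [if_pos hik, if_pos (show i ≤ k + 1 by omega)]
      by_cases h1 : m + 1 + 1 ≤ k
      · rw [if_pos h1, if_pos (show m + 1 ≤ k by omega),
          if_pos (show m + 1 + 1 ≤ k + 1 by omega)]
        ring
      · by_cases h2 : m + 1 + 1 ≤ k + 1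
        · rw [if_neg h1, if_pos (show m + 1 ≤ k by omega), if_pos h2,
            if_neg (show ¬ m + 1 + 1 = i by omega)]
          ring
        · rw [if_neg h1, if_neg (show ¬ m + 1 ≤ k by omega), if_neg h2,
            if_neg (show ¬ m + 1 + 1 = i by omega),
            show m + 1 - k = m + 1 + 1 - (k + 1) by omega, piProd_succ' α (m + 1)]
          ring
    · simp only [if_neg hik]
      have hik' : k < i := lt_of_not_ge hik
      by_cases h1 : m + 1 + 1 ≤ k
      · -- j ≤ k < i
        rw [if_neg (show ¬ m + 1 + 1 = i by omega), if_neg (show ¬ m + 1 = k by omega),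
          if_pos (show m + 1 < i by omega)]
        by_cases h3 : i ≤ k + 1
        · rw [if_pos h3, if_pos (show m + 1 + 1 ≤ k + 1 by omega)]; ring
        · rw [if_neg h3, if_neg (show ¬ m + 1 + 1 = k + 1 by omega)]
          split_ifs <;> first | ring1 | (exfalso; omega)
      · by_cases h2 : m + 1 + 1 = k + 1
        · -- j = k + 1, so m + 1 = k
          by_cases h4 : m + 1 + 1 = i
          · -- i = k + 1 = j
            rw [if_pos h4, if_neg (show ¬ m + 1 + 1 = k by omega),
              if_neg (show ¬ m + 1 + 1 < i by omega), if_pos (show m + 1 = k by omega),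
              if_pos (show i ≤ k + 1 by omega), if_pos (show m + 1 + 1 ≤ k + 1 by omega),
              show m + 1 + 1 - k = 1 by omega, pow_one, show k = m + 1 by omega,
              piProd_succ' α (m + 1)]
            field_simp
            ring
          · -- i > k + 1 = j
            rw [if_neg h4, if_pos (show m + 1 = k by omega),
              if_neg (show ¬ i ≤ k + 1 by omega), if_pos (show m + 1 + 1 = k + 1 by omega),
              show k = m + 1 by omega, piProd_succ' α (m + 1)]
            ring
        · -- j > k + 1
          by_cases h4 : m + 1 + 1 = i
          · -- j = i > k + 1
            rw [if_pos h4, if_neg (show ¬ m + 1 + 1 = k by omega),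
              if_neg (show ¬ m + 1 + 1 < i by omega), if_neg (show ¬ m + 1 = k by omega),
              if_pos (show m + 1 < i by omega), if_neg (show ¬ i ≤ k + 1 by omega),
              if_neg (show ¬ m + 1 + 1 = k + 1 by omega),
              if_neg (show ¬ m + 1 + 1 < i by omega),
              show m + 1 + 1 - k = (m + 1 + 1 - (k + 1)) + 1 by omega, pow_succ]
            field_simp
            ring
          · by_cases h5 : m + 1 + 1 < i
            · -- k + 1 < j < i
              rw [if_neg h4, if_pos h5, if_neg (show ¬ m + 1 = k by omega),
                if_pos (show m + 1 < i by omega), if_neg (show ¬ i ≤ k + 1 by omega),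
                if_neg (show ¬ m + 1 + 1 = k + 1 by omega), if_pos h5]
              ring
            · -- j > i
              rw [if_neg h4, if_neg h5, if_neg (show ¬ m + 1 = k by omega),
                if_neg (show ¬ m + 1 < i by omega),
                show m + 1 - k = m + 1 + 1 - (k + 1) by omega, piProd_succ' α (m + 1)]
              by_cases h3 : i ≤ k + 1
              · rw [if_pos h3, if_neg (show ¬ m + 1 + 1 ≤ k + 1 by omega)]; ring
              · rw [if_neg h3, if_neg (show ¬ m + 1 + 1 = k + 1 by omega),
                  if_neg (show ¬ m + 1 + 1 < i by omega)]
                ring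

/-- with `B_i = H_i + β I`, the vectors `v_{n-1}, …, v_1` form a chain of
generalised eigenvectors of `H_i` associated with `-β`: `B_i v_{n-1} = 0` and
`B_i v_k = v_{k+1}` for `1 ≤ k ≤ n-2`. -/
theorem perturbed_cascade_generalised_eigenvectors
    (n : ℕ) (hn : 2 ≤ n) (α : ℕ → ℝ) (β ε : ℝ) (hε : ε ≠ 0)
    (i : ℕ) (hi : 1 ≤ i) (hin : i ≤ n)
    (B : Matrix (Fin n) (Fin n) ℝ)
    (hB : B = perturbedCascadeMatrix n α β ε i + β • (1 : Matrix (Fin n) (Fin n) ℝ)) :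
    B *ᵥ genEigVec n α ε i (n - 1) = 0 ∧
      ∀ k : ℕ, 1 ≤ k → k ≤ n - 2 →
        B *ᵥ genEigVec n α ε i k = genEigVec n α ε i (k + 1) := by
  have key : ∀ k : ℕ, 1 ≤ k →
      B *ᵥ genEigVec n α ε i k = genEigVec n α ε i (k + 1) := by
    intro k hk1
    funext r
    rw [hB, mulVecB' n α β ε i]
    exact genEigVec_step n α ε hε i hi k hk1 r
  constructor
  · rw [key (n - 1) (by omega), show n - 1 + 1 = n by omega]
    funext r
    simp only [genEigVec, Pi.zero_apply]
    rw [if_pos hin, if_pos (by omega : r.val + 1 ≤ n)]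
  · intro k hk1 _
    exact key k hk1
end

section
/- Let n ≥ 1 be an integer and let α_1,…,α_{n+1}, β, ε, λ be real numbers with β ≠ λ, ε ≠ 0, and β − λ + ε ≠ 0. Suppose x : ℝ → ℝ satisfies x(0) = 0 and, for every real t, x is differentiable at t with derivative α_{n+1} · ((∏_{j=1}^n α_j)/(β−λ)^n) · e^{−λt} · P(n, (β−λ)t) − (β+ε) x(t), where P is the normalised lower incomplete gamma function. Then for every real t, x(t) = (α_{n+1}/(β − λ + ε)) · ((∏_{j=1}^n α_j)/(β−λ)^n) · [ e^{−λt} − ((λ−β)^n/ε^n) e^{−(β+ε)t} − e^{−βt} ∑_{k=0}^{n−1} ((ε^{n−k} − (λ−β)^{n−k}) (β−λ)^k t^k) / (ε^{n−k} k!) ]. -/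
open Finset in
lemma expsum_hasDerivAt (n : ℕ) (hn : 1 ≤ n) (y : ℝ) :
    HasDerivAt (fun y : ℝ => 1 - Real.exp (-y) * ∑ k ∈ range n, y ^ k / k.factorial)
      (Real.exp (-y) * y ^ (n-1) / (n-1).factorial) y := by
  obtain ⟨m, rfl⟩ : ∃ m, n = m + 1 := ⟨n - 1, (Nat.succ_pred_eq_of_pos hn).symm⟩
  have he : HasDerivAt (fun y : ℝ => Real.exp (-y)) (-Real.exp (-y)) y := by
    simpa using ((hasDerivAt_id y).neg.exp)
  have hs : HasDerivAt (fun y : ℝ => ∑ k ∈ range (m+1), y ^ k / k.factorial)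
      (∑ k ∈ range (m+1), (k : ℝ) * y ^ (k-1) / k.factorial) y := by
    apply HasDerivAt.fun_sum
    intro k _
    simpa [mul_comm, mul_div_assoc] using (hasDerivAt_pow k y).div_const (k.factorial : ℝ)
  have hshift : (∑ k ∈ range (m+1), (k : ℝ) * y ^ (k-1) / k.factorial)
      = ∑ k ∈ range m, y ^ k / k.factorial := by
    rw [Finset.sum_range_succ' (fun k => (k : ℝ) * y ^ (k-1) / k.factorial) m]
    simp only [Nat.cast_zero, zero_mul, zero_div, add_zero]
    apply Finset.sum_congr rfl
    intro k _
    rw [Nat.factorial_succ]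
    push_cast
    have : (k : ℝ) + 1 ≠ 0 := by positivity
    field_simp
  have := (he.mul hs).const_sub 1
  refine this.congr_deriv (Eq.symm ?_)
  rw [hshift]
  have : (∑ k ∈ range (m+1), y ^ k / k.factorial)
      = (∑ k ∈ range m, y ^ k / k.factorial) + y ^ m / m.factorial :=
    Finset.sum_range_succ _ m
  rw [this]
  simp only [Nat.add_sub_cancel]
  ring

lemma normIncGamma_eq (n : ℕ) (hn : 1 ≤ n) (x : ℝ) :
    normIncGamma n x = 1 - Real.exp (-x) * ∑ k ∈ Finset.range n, x ^ k / k.factorial := by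
  have key : (∫ s in (0:ℝ)..x, Real.exp (-s) * s ^ (n - 1) / (n-1).factorial)
      = (1 - Real.exp (-x) * ∑ k ∈ Finset.range n, x ^ k / k.factorial)
        - (1 - Real.exp (-0) * ∑ k ∈ Finset.range n, (0:ℝ) ^ k / k.factorial) := by
    apply intervalIntegral.integral_eq_sub_of_hasDerivAt
    · intro y _; exact expsum_hasDerivAt n hn y
    · apply Continuous.intervalIntegrable
      continuity
  have h0 : (∑ k ∈ Finset.range n, (0:ℝ) ^ k / k.factorial) = 1 := by
    obtain ⟨m, rfl⟩ : ∃ m, n = m + 1 := ⟨n - 1, (Nat.succ_pred_eq_of_pos hn).symm⟩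
    rw [Finset.sum_range_succ' (fun k => (0:ℝ) ^ k / k.factorial) m]
    simp [Finset.sum_eq_zero (fun k _ => by simp : ∀ k ∈ Finset.range m, (0:ℝ) ^ (k+1) / (k+1).factorial = 0)]
  rw [h0] at key
  norm_num at key
  rw [normIncGamma]; exact key

open Finset in
lemma coeff_id (β ε lam : ℝ) (hε : ε ≠ 0) (p k : ℕ) :
    (ε ^ p - (lam - β) ^ p) * (β - lam) ^ (k+1) / (ε ^ p * (((k:ℝ)+1) * k.factorial)) * ((k:ℝ)+1)
      + ε * ((ε ^ (p+1) - (lam - β) ^ (p+1)) * (β - lam) ^ k / (ε ^ (p+1) * k.factorial)) =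
    (β - lam + ε) * ((β - lam) ^ k / k.factorial) := by
  have hk : (k.factorial : ℝ) ≠ 0 := Nat.cast_ne_zero.mpr k.factorial_ne_zero
  have hk1 : ((k:ℝ)+1) ≠ 0 := by positivity
  field_simp
  ring

lemma top_id (β ε lam : ℝ) (hε : ε ≠ 0) (m : ℕ) :
    ε * ((ε ^ 1 - (lam - β) ^ 1) * (β - lam) ^ m / (ε ^ 1 * m.factorial)) =
    (β - lam + ε) * ((β - lam) ^ m / m.factorial) := by
  have hm : (m.factorial : ℝ) ≠ 0 := Nat.cast_ne_zero.mpr m.factorial_ne_zero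
  field_simp
  ring

open Finset in
lemma sum_identity (n : ℕ) (hn : 1 ≤ n) (β ε lam : ℝ) (hε : ε ≠ 0) (t : ℝ) :
    (∑ k ∈ range n, (ε ^ (n-k) - (lam-β) ^ (n-k)) * (β-lam) ^ k / (ε ^ (n-k) * k.factorial)
        * ((k:ℝ) * t ^ (k-1)))
      + ε * ∑ k ∈ range n,
          (ε ^ (n-k) - (lam-β) ^ (n-k)) * (β-lam) ^ k / (ε ^ (n-k) * k.factorial) * t ^ k
    = (β - lam + ε) * ∑ k ∈ range n, (β-lam) ^ k * t ^ k / k.factorial := by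
  obtain ⟨m, rfl⟩ : ∃ m, n = m + 1 := ⟨n - 1, (Nat.succ_pred_eq_of_pos hn).symm⟩
  set c : ℕ → ℝ := fun k =>
    (ε ^ (m+1-k) - (lam-β) ^ (m+1-k)) * (β-lam) ^ k / (ε ^ (m+1-k) * k.factorial) with hc
  rw [Finset.sum_range_succ' (fun k => c k * ((k:ℝ) * t ^ (k-1))) m,
      Finset.sum_range_succ (fun k => c k * t ^ k) m,
      Finset.sum_range_succ (fun k => (β-lam) ^ k * t ^ k / k.factorial) m]
  simp only [Nat.cast_zero, zero_mul, mul_zero, add_zero, mul_add, Finset.mul_sum]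
  rw [← add_assoc, ← Finset.sum_add_distrib]
  congr 1
  · apply Finset.sum_congr rfl
    intro k hk
    rw [Finset.mem_range] at hk
    have h1 : m + 1 - (k+1) = m - k := by omega
    have h2 : m + 1 - k = (m - k) + 1 := by omega
    simp only [hc, h1, h2, Nat.factorial_succ, Nat.add_sub_cancel]
    push_cast
    linear_combination (coeff_id β ε lam hε (m - k) k) * t ^ k
  · have h3 : m + 1 - m = 1 := by omega
    simp only [hc, h3]
    linear_combination (top_id β ε lam hε m) * t ^ m

/-- solution for the ε-perturbed output protein of a reordered cascade under an
exponentially decaying stimulus with `β ≠ λ`. -/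
theorem perturbed_output_decaying_stimulus
    (n : ℕ) (hn : 1 ≤ n) (α : ℕ → ℝ) (β ε lam : ℝ)
    (hbl : β ≠ lam) (hε : ε ≠ 0) (hble : β - lam + ε ≠ 0)
    (x : ℝ → ℝ) (h0 : x 0 = 0)
    (hx : ∀ t : ℝ, HasDerivAt x
      (α (n + 1) * ((∏ j ∈ Finset.Icc 1 n, α j) / (β - lam) ^ n) * Real.exp (-lam * t)
        * normIncGamma n ((β - lam) * t) - (β + ε) * x t) t) :
    ∀ t : ℝ, x t = (α (n + 1) / (β - lam + ε)) * ((∏ j ∈ Finset.Icc 1 n, α j) / (β - lam) ^ n) *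
      (Real.exp (-lam * t) - ((lam - β) ^ n / ε ^ n) * Real.exp (-(β + ε) * t)
        - Real.exp (-β * t) * ∑ k ∈ Finset.range n,
            (ε ^ (n - k) - (lam - β) ^ (n - k)) * (β - lam) ^ k * t ^ k
              / (ε ^ (n - k) * Nat.factorial k)) := by
  set Q : ℝ := (∏ j ∈ Finset.Icc 1 n, α j) / (β - lam) ^ n with hQ
  set c : ℕ → ℝ := fun k =>
    (ε ^ (n-k) - (lam-β) ^ (n-k)) * (β-lam) ^ k / (ε ^ (n-k) * k.factorial) with hc
  have hrw : ∀ s : ℝ, (∑ k ∈ Finset.range n,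
      (ε ^ (n - k) - (lam - β) ^ (n - k)) * (β - lam) ^ k * s ^ k
        / (ε ^ (n - k) * Nat.factorial k)) = ∑ k ∈ Finset.range n, c k * s ^ k := by
    intro s
    refine Finset.sum_congr rfl fun k _ => ?_
    simp only [hc]; ring
  set y : ℝ → ℝ := fun u => (α (n+1) / (β - lam + ε)) * Q *
      (Real.exp (-lam*u) - ((lam-β)^n/ε^n) * Real.exp (-(β+ε)*u)
        - Real.exp (-β*u) * ∑ k ∈ Finset.range n, c k * u ^ k) with hy
  -- derivative of y
  have hder : ∀ s : ℝ, HasDerivAt y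
      (α (n + 1) * Q * Real.exp (-lam * s) * normIncGamma n ((β - lam) * s) - (β + ε) * y s) s := by
    intro s
    have e1 : HasDerivAt (fun u : ℝ => Real.exp (-lam * u)) (-lam * Real.exp (-lam * s)) s := by
      simpa [mul_comm] using ((hasDerivAt_id s).const_mul (-lam)).exp
    have e2 : HasDerivAt (fun u : ℝ => Real.exp (-(β+ε) * u)) (-(β+ε) * Real.exp (-(β+ε) * s)) s := by
      simpa [mul_comm] using ((hasDerivAt_id s).const_mul (-(β+ε))).exp
    have e3 : HasDerivAt (fun u : ℝ => Real.exp (-β * u)) (-β * Real.exp (-β * s)) s := by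
      simpa [mul_comm] using ((hasDerivAt_id s).const_mul (-β)).exp
    have eS : HasDerivAt (fun u : ℝ => ∑ k ∈ Finset.range n, c k * u ^ k)
        (∑ k ∈ Finset.range n, c k * ((k:ℝ) * s ^ (k-1))) s :=
      HasDerivAt.fun_sum fun k _ => (hasDerivAt_pow k s).const_mul (c k)
    have eE := ((e1.sub (e2.const_mul ((lam-β)^n/ε^n))).sub (e3.mul eS)).const_mul
      ((α (n+1) / (β - lam + ε)) * Q)
    refine eE.congr_deriv (Eq.symm ?_)
    rw [normIncGamma_eq n hn ((β - lam) * s)]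
    have hms : (∑ k ∈ Finset.range n, ((β - lam) * s) ^ k / k.factorial)
        = ∑ k ∈ Finset.range n, (β - lam) ^ k * s ^ k / k.factorial :=
      Finset.sum_congr rfl fun k _ => by rw [mul_pow]
    rw [hms]
    have hexp : Real.exp (-lam * s) * Real.exp (-((β - lam) * s)) = Real.exp (-β * s) := by
      rw [← Real.exp_add]; congr 1; ring
    have hSI : (∑ k ∈ Finset.range n, c k * ((k:ℝ) * s ^ (k-1)))
        + ε * ∑ k ∈ Finset.range n, c k * s ^ k
        = (β - lam + ε) * ∑ k ∈ Finset.range n, (β-lam) ^ k * s ^ k / k.factorial := by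
      simp only [hc]
      exact sum_identity n hn β ε lam hε s
    have hKW : α (n+1) * Q = (β - lam + ε) * ((α (n+1) / (β - lam + ε)) * Q) := by
      field_simp
    rw [hKW]
    simp only [hy]
    linear_combination
      (((α (n+1) / (β - lam + ε)) * Q) * Real.exp (-β * s)) * hSI
      - ((β - lam + ε) * ((α (n+1) / (β - lam + ε)) * Q)
          * (∑ k ∈ Finset.range n, (β - lam) ^ k * s ^ k / k.factorial)) * hexp
  -- y 0 = 0
  have hy0 : y 0 = 0 := by
    have hS0 : (∑ k ∈ Finset.range n, c k * (0:ℝ) ^ k) = c 0 := by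
      obtain ⟨m, rfl⟩ : ∃ m, n = m + 1 := ⟨n - 1, (Nat.succ_pred_eq_of_pos hn).symm⟩
      rw [Finset.sum_range_succ' (fun k => c k * (0:ℝ) ^ k) m]
      simp
    have hεn : (ε : ℝ) ^ n ≠ 0 := pow_ne_zero n hε
    have hE0 : Real.exp (-lam*(0:ℝ)) - ((lam-β)^n/ε^n) * Real.exp (-(β+ε)*(0:ℝ))
        - Real.exp (-β*(0:ℝ)) * ∑ k ∈ Finset.range n, c k * (0:ℝ)^k = 0 := by
      rw [hS0]
      simp only [hc, Nat.sub_zero, pow_zero, Nat.factorial_zero, Nat.cast_one, mul_one,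
        mul_zero, neg_zero, Real.exp_zero, one_mul]
      field_simp
      ring
    simp only [hy]
    rw [hE0, mul_zero]
  -- uniqueness via vanishing derivative of (x - y) * exp((β+ε)t)
  have hg : ∀ u : ℝ, HasDerivAt (fun v => (x v - y v) * Real.exp ((β+ε)*v)) 0 u := by
    intro u
    have hee : HasDerivAt (fun v : ℝ => Real.exp ((β+ε) * v)) ((β+ε) * Real.exp ((β+ε) * u)) u := by
      simpa [mul_comm] using ((hasDerivAt_id u).const_mul (β+ε)).exp
    have := ((hx u).sub (hder u)).mul hee
    refine this.congr_deriv (Eq.symm ?_)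
    rw [Pi.sub_apply]
    ring
  have hconst : ∀ u : ℝ, (x u - y u) * Real.exp ((β+ε)*u) = (x 0 - y 0) * Real.exp ((β+ε)*0) := by
    intro u
    exact is_const_of_deriv_eq_zero (fun v => (hg v).differentiableAt)
      (fun v => (hg v).deriv) u 0
  intro t
  have h1 := hconst t
  rw [h0, hy0, sub_zero, mul_zero, zero_mul] at h1
  have h2 : x t - y t = 0 := by
    have := Real.exp_ne_zero ((β+ε)*t)
    exact (mul_eq_zero.mp h1).resolve_right this
  have key : x t = y t := by linarith
  rw [key, hy]
  rw [hrw t]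
end

section
/- Let n ≥ 1 be an integer and let α_1,…,α_{n+1}, β, ε be real numbers with ε ≠ 0. Suppose x : ℝ → ℝ satisfies x(0) = 0 and, for every real t, x is differentiable at t with derivative α_{n+1} · ((∏_{j=1}^n α_j) t^n / n!) · e^{−βt} − (β+ε) x(t). Then for every real t, x(t) = ((∏_{l=1}^{n+1} α_l)/ε^{n+1}) · e^{−βt} · [ ε^n ∑_{k=0}^n ((−1)^k t^{n−k}) / (ε^k (n−k)!) + (−1)^{n+1} e^{−εt} ]. -/
open Finset Real

private lemma term_cancel (n k : ℕ) (hk : k < n) (ε t : ℝ) (hε : ε ≠ 0) :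
    (-1:ℝ)^k * (((n-k:ℕ):ℝ) * t^(n-k-1)) / (ε^k * Nat.factorial (n-k))
      = -ε * ((-1:ℝ)^(k+1) * t^(n-(k+1)) / (ε^(k+1) * Nat.factorial (n-(k+1)))) := by
  obtain ⟨m, hm⟩ : ∃ m, n - k = m + 1 := ⟨n - k - 1, by omega⟩
  have h1 : n - (k+1) = m := by omega
  rw [hm, h1, Nat.factorial_succ]
  simp only [Nat.add_sub_cancel]
  have hf : ((Nat.factorial m : ℝ)) ≠ 0 := Nat.cast_ne_zero.mpr (Nat.factorial_ne_zero m)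
  have hm1 : ((m:ℝ) + 1) ≠ 0 := by positivity
  push_cast
  field_simp
  ring

private lemma key_sum (n : ℕ) (ε t : ℝ) (hε : ε ≠ 0) :
    ∑ k ∈ Finset.range (n+1), ((-1:ℝ)^k * (((n-k:ℕ):ℝ) * t^(n-k-1)) / (ε^k * Nat.factorial (n-k)))
      = ε * t^n / Nat.factorial n
        - ε * ∑ k ∈ Finset.range (n+1), ((-1:ℝ)^k * t^(n-k) / (ε^k * Nat.factorial (n-k))) := by
  rw [Finset.sum_range_succ]
  rw [Finset.sum_range_succ' (fun k => (-1:ℝ)^k * t^(n-k) / (ε^k * Nat.factorial (n-k))) n]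
  simp only [Nat.sub_self, Nat.cast_zero, pow_zero, Nat.factorial_zero, Nat.cast_one,
    Nat.sub_zero, one_mul, mul_one, zero_mul, zero_div, add_zero]
  have : ∑ k ∈ Finset.range n, ((-1:ℝ)^k * (((n-k:ℕ):ℝ) * t^(n-k-1)) / (ε^k * Nat.factorial (n-k)))
      = ∑ k ∈ Finset.range n, (-ε * ((-1:ℝ)^(k+1) * t^(n-(k+1)) / (ε^(k+1) * Nat.factorial (n-(k+1))))) := by
    refine Finset.sum_congr rfl fun k hk => ?_
    exact term_cancel n k (Finset.mem_range.mp hk) ε t hε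
  rw [this, ← Finset.mul_sum]
  ring

private lemma hasDerivAt_S (n : ℕ) (ε : ℝ) (t : ℝ) :
    HasDerivAt (fun t : ℝ => ∑ k ∈ Finset.range (n+1),
        ((-1:ℝ)^k * t^(n-k) / (ε^k * Nat.factorial (n-k))))
      (∑ k ∈ Finset.range (n+1),
        ((-1:ℝ)^k * (((n-k:ℕ):ℝ) * t^(n-k-1)) / (ε^k * Nat.factorial (n-k)))) t := by
  refine HasDerivAt.fun_sum fun k hk => ?_
  exact ((hasDerivAt_pow (n-k) t).const_mul ((-1:ℝ)^k)).div_const _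

/-- solution for the ε-perturbed output protein of a reordered cascade under an
exponentially decaying stimulus in the degenerate case `λ = β`. -/
theorem perturbed_output_decaying_stimulus_degenerate
    (n : ℕ) (hn : 1 ≤ n) (α : ℕ → ℝ) (β ε : ℝ) (hε : ε ≠ 0)
    (x : ℝ → ℝ) (h0 : x 0 = 0)
    (hx : ∀ t : ℝ, HasDerivAt x
      (α (n + 1) * ((∏ j ∈ Finset.Icc 1 n, α j) * t ^ n / Nat.factorial n)
        * Real.exp (-β * t) - (β + ε) * x t) t) :
    ∀ t : ℝ, x t = ((∏ l ∈ Finset.Icc 1 (n + 1), α l) / ε ^ (n + 1)) * Real.exp (-β * t) *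
      (ε ^ n * ∑ k ∈ Finset.range (n + 1),
          (-1) ^ k * t ^ (n - k) / (ε ^ k * Nat.factorial (n - k))
        + (-1) ^ (n + 1) * Real.exp (-ε * t)) := by
  set A : ℝ := ∏ l ∈ Finset.Icc 1 (n + 1), α l with hAdef
  have hA : α (n + 1) * (∏ j ∈ Finset.Icc 1 n, α j) = A := by
    rw [hAdef, Finset.prod_Icc_succ_top (by omega : 1 ≤ n + 1)]
    ring
  set S : ℝ → ℝ := fun t => ∑ k ∈ Finset.range (n+1),
      ((-1:ℝ)^k * t^(n-k) / (ε^k * Nat.factorial (n-k))) with hSdef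
  set F : ℝ → ℝ := fun t => (A / ε^(n+1)) * Real.exp (-β*t) *
      (ε^n * S t + (-1:ℝ)^(n+1) * Real.exp (-ε*t)) with hFdef
  have hfact : ((Nat.factorial n : ℝ)) ≠ 0 := Nat.cast_ne_zero.mpr (Nat.factorial_ne_zero n)
  -- S satisfies S' = ε t^n/n! - ε S
  have hS' : ∀ t, HasDerivAt S (ε * t^n / Nat.factorial n - ε * S t) t := by
    intro t
    have := hasDerivAt_S n ε t
    rwa [key_sum n ε t hε] at this
  -- F(0) = 0
  have hS0 : S 0 = (-1:ℝ)^n / ε^n := by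
    simp only [hSdef]
    rw [Finset.sum_eq_single n]
    · simp
    · intro k hk hkn
      have hklt : k < n := by
        have := Finset.mem_range.mp hk; omega
      have : (0:ℝ)^(n-k) = 0 := zero_pow (by omega)
      simp [this]
    · intro h; exact absurd (Finset.self_mem_range_succ n) h
  have hF0 : F 0 = 0 := by
    rw [hFdef]
    simp only [mul_zero, neg_zero, Real.exp_zero, mul_one, hS0]
    have : ε^n * ((-1:ℝ)^n / ε^n) = (-1:ℝ)^n := by field_simp
    rw [this]
    simp [pow_succ]
  -- F satisfies the same ODE
  have hF' : ∀ t, HasDerivAt F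
      (A * t ^ n / Nat.factorial n * Real.exp (-β * t) - (β + ε) * F t) t := by
    intro t
    have hE : HasDerivAt (fun t : ℝ => Real.exp (-β*t)) (Real.exp (-β*t) * (-β)) t := by
      have h1 : HasDerivAt (fun t : ℝ => -β*t) (-β) t := by
        simpa using (hasDerivAt_id t).const_mul (-β)
      exact h1.exp
    have hEe : HasDerivAt (fun t : ℝ => Real.exp (-ε*t)) (Real.exp (-ε*t) * (-ε)) t := by
      have h1 : HasDerivAt (fun t : ℝ => -ε*t) (-ε) t := by
        simpa using (hasDerivAt_id t).const_mul (-ε)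
      exact h1.exp
    have hP : HasDerivAt (fun t : ℝ => ε^n * S t + (-1:ℝ)^(n+1) * Real.exp (-ε*t))
        (ε^n * (ε * t^n / Nat.factorial n - ε * S t)
          + (-1:ℝ)^(n+1) * (Real.exp (-ε*t) * (-ε))) t :=
      ((hS' t).const_mul (ε^n)).add (hEe.const_mul ((-1:ℝ)^(n+1)))
    have hεn : (ε:ℝ)^(n+1) ≠ 0 := pow_ne_zero _ hε
    have hD := ((hE.mul hP).const_mul (A / ε^(n+1)))
    have hD' : HasDerivAt F
        (A / ε^(n+1) * (Real.exp (-β*t) * (-β) * (ε^n * S t + (-1:ℝ)^(n+1) * Real.exp (-ε*t))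
          + Real.exp (-β*t) * (ε^n * (ε * t^n / Nat.factorial n - ε * S t)
            + (-1:ℝ)^(n+1) * (Real.exp (-ε*t) * (-ε))))) t := by
      rw [hFdef]; simpa [mul_assoc] using hD
    convert hD' using 1
    simp only [hFdef]
    field_simp
    ring
  -- uniqueness via integrating factor
  intro t
  set g : ℝ → ℝ := fun t => (x t - F t) * Real.exp ((β+ε)*t) with hgdef
  have hg' : ∀ s, HasDerivAt g 0 s := by
    intro s
    have hExp : HasDerivAt (fun s : ℝ => Real.exp ((β+ε)*s)) (Real.exp ((β+ε)*s) * (β+ε)) s := by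
      have h1 : HasDerivAt (fun s : ℝ => (β+ε)*s) (β+ε) s := by
        simpa using (hasDerivAt_id s).const_mul (β+ε)
      exact h1.exp
    have hsub := (hx s).sub (hF' s)
    have := hsub.mul hExp
    convert this using 1
    case e'_4 => rfl
    case e'_5 => rfl
    case e'_8 => rfl
    rw [← hA]
    simp only [Pi.sub_apply]
    ring
  have hgd : Differentiable ℝ g := fun s => (hg' s).differentiableAt
  have hgc : g t = g 0 := by
    apply is_const_of_deriv_eq_zero hgd
    intro s; exact (hg' s).deriv
  have hg0 : g 0 = 0 := by
    simp only [hgdef]; simp [h0, hF0]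
  have hxt : x t = F t := by
    have h1 : (x t - F t) * Real.exp ((β+ε)*t) = 0 := hgc.trans hg0
    have h2 : Real.exp ((β+ε)*t) ≠ 0 := Real.exp_ne_zero _
    rcases mul_eq_zero.mp h1 with h | h
    · linarith
    · exact absurd h h2
  exact hxt
end
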